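/- arXiv:1203.2473 — 4 statements merged into one kernel-verified Lean document; each statement's English description precedes it below -/
import Mathlib

section
/- For squarefree n with prime factorization p₁⋯p_m, the unitary Cayley graph X_n is isomorphic to the tensor product of the complete graphs K_{p₁}, …, K_{p_m}. -/
def unitaryCayley (n : ℕ) : SimpleGraph (ZMod n) where
  Adj a b := a ≠ b ∧ IsUnit (a - b)
  symm := by
    constructor
    rintro a b ⟨hne, hu⟩
    exact ⟨hne.symm, by rw [show b - a = -(a - b) by ring]; exact hu.neg⟩
  loopless := ⟨fun a h => h.1 rfl⟩

def tensorPi {ι : Type*} {V : ι → Type*} (H : ∀ i, SimpleGraph (V i)) :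
    SimpleGraph (∀ i, V i) where
  Adj x y := x ≠ y ∧ ∀ i, (H i).Adj (x i) (y i)
  symm := ⟨fun _ _ ⟨hne, h⟩ => ⟨hne.symm, fun i => (h i).symm⟩⟩
  loopless := ⟨fun _ h => h.1 rfl⟩

theorem unitaryCayley_squarefree_iso (n : ℕ) (hn : Squarefree n) :
    Nonempty (unitaryCayley n ≃g
      tensorPi (fun p : n.primeFactors => (⊤ : SimpleGraph (ZMod (p : ℕ))))) := by
  have hprod : ∏ p : n.primeFactors, (p : ℕ) = n := by
    rw [Finset.prod_coe_sort n.primeFactors (fun p => p)]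
    exact Nat.prod_primeFactors_of_squarefree hn
  have hcop : Pairwise (Function.onFun Nat.Coprime fun p : n.primeFactors => (p : ℕ)) := by
    intro p q hpq
    exact (Nat.coprime_primes (Nat.prime_of_mem_primeFactors p.2)
      (Nat.prime_of_mem_primeFactors q.2)).mpr (fun h => hpq (Subtype.ext h))
  let e : ZMod n ≃+* ∀ p : n.primeFactors, ZMod (p : ℕ) :=
    (ZMod.ringEquivCongr hprod.symm).trans (ZMod.prodEquivPi _ hcop)
  have hunit : ∀ x : ZMod n, IsUnit x ↔ ∀ i : n.primeFactors, e x i ≠ 0 := by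
    intro x
    constructor
    · intro h i
      haveI := Fact.mk (Nat.prime_of_mem_primeFactors i.2)
      exact ((h.map e).map (Pi.evalRingHom _ i)).ne_zero
    · intro h
      have hu : IsUnit (e x) := by
        refine IsUnit.of_mul_eq_one (fun i => (e x i)⁻¹) (funext fun i => ?_)
        haveI := Fact.mk (Nat.prime_of_mem_primeFactors i.2)
        exact mul_inv_cancel₀ (h i)
      have := hu.map e.symm
      rwa [RingEquiv.symm_apply_apply] at this
  refine ⟨⟨e.toEquiv, ?_⟩⟩
  intro a b
  simp only [unitaryCayley, tensorPi, RingEquiv.toEquiv_eq_coe, Equiv.coe_fn_mk,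
    SimpleGraph.top_adj, EquivLike.coe_coe]
  have hsub : ∀ i, e (a - b) i = e a i - e b i := by
    intro i; rw [map_sub]; rfl
  constructor
  · rintro ⟨hne, h⟩
    refine ⟨fun hab => hne (congrFun (congrArg e hab) |> funext), (hunit (a - b)).mpr fun i => ?_⟩
    rw [hsub i, sub_ne_zero]
    exact h i
  · rintro ⟨hne, h⟩
    refine ⟨fun hab => hne (e.injective hab), fun i => ?_⟩
    have := (hunit (a - b)).mp h i
    rw [hsub i, sub_ne_zero] at this
    exact this
end

section
/- For every positive integer n, the unitary Cayley graph X_n is isomorphic to the blow-up of X_{rad(n)} of order n/rad(n). -/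
def blowup {V : Type*} (G : SimpleGraph V) (r : ℕ) : SimpleGraph (V × Fin r) where
  Adj x y := G.Adj x.1 y.1
  symm := ⟨fun _ _ h => G.symm.symm _ _ h⟩
  loopless := ⟨fun _ h => G.loopless.irrefl _ h⟩

def rad (n : ℕ) : ℕ := n.primeFactors.prod id

lemma primeFactors_rad (n : ℕ) : (rad n).primeFactors = n.primeFactors := by
  unfold rad
  rw [show n.primeFactors.prod id = ∏ p ∈ n.primeFactors, p from rfl]
  exact Nat.primeFactors_prod fun p hp => Nat.prime_of_mem_primeFactors hp

theorem unitaryCayley_iso_blowup (n : ℕ) (hn : 0 < n) :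
    Nonempty (unitaryCayley n ≃g blowup (unitaryCayley (rad n)) (n / rad n)) := by
  haveI : NeZero n := ⟨hn.ne'⟩
  set r := rad n with hrdef
  have hrpos : 0 < r := Finset.prod_pos fun p hp => (Nat.prime_of_mem_primeFactors hp).pos
  haveI : NeZero r := ⟨hrpos.ne'⟩
  have hdvd : r ∣ n := Nat.prod_primeFactors_dvd n
  set m := n / r with hmdef
  have hrm : r * m = n := Nat.mul_div_cancel' hdvd
  have hpf : r.primeFactors = n.primeFactors := primeFactors_rad n
  have hr1 : r = 1 → n = 1 := by
    intro h
    have h2 : n.primeFactors = ∅ := by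
      rw [← hpf, h]; simp
    rcases Nat.primeFactors_eq_empty.mp h2 with h | h
    · omega
    · exact h
  -- cast identities
  have hxx : ∀ x : ZMod n, ((x.val : ℕ) : ZMod n) = x := fun x => by
    rw [ZMod.natCast_val, ZMod.cast_id]
  have hcast : ∀ x : ZMod n, ((x.val : ℕ) : ZMod r) = ZMod.castHom hdvd (ZMod r) x :=
    fun x => by rw [ZMod.natCast_val, ZMod.castHom_apply]
  -- key unit transfer
  have key : ∀ x : ZMod n,
      (((x.val : ℕ) : ZMod r) ≠ 0 ∧ IsUnit ((x.val : ℕ) : ZMod r)) ↔ (x ≠ 0 ∧ IsUnit x) := by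
    intro x
    constructor
    · rintro ⟨hg0, hgu⟩
      have hv : x.val ≠ 0 := by
        intro h; apply hg0; rw [h]; simp
      have hcor : x.val.Coprime r := (ZMod.isUnit_iff_coprime x.val r).mp hgu
      have hco : x.val.Coprime n := by
        rw [← Nat.disjoint_primeFactors hv hn.ne', ← hpf]
        exact (Nat.disjoint_primeFactors hv hrpos.ne').mpr hcor
      refine ⟨?_, ?_⟩
      · intro h; apply hv; rw [h]; simp
      · rw [← hxx x]; exact (ZMod.isUnit_iff_coprime x.val n).mpr hco
    · rintro ⟨hx0, hxu⟩
      have hv : x.val ≠ 0 := fun h => hx0 ((ZMod.val_eq_zero x).mp h)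
      have hco : x.val.Coprime n := (ZMod.isUnit_iff_coprime x.val n).mp (by rwa [hxx x])
      have hcor : x.val.Coprime r := by
        rw [← Nat.disjoint_primeFactors hv hrpos.ne', hpf]
        exact (Nat.disjoint_primeFactors hv hn.ne').mpr hco
      refine ⟨?_, (ZMod.isUnit_iff_coprime x.val r).mpr hcor⟩
      intro h
      have hrd : r ∣ x.val := (ZMod.natCast_eq_zero_iff x.val r).mp h
      have hre : r = 1 := Nat.eq_one_of_dvd_coprimes hcor.symm (dvd_refl r) hrd
      have hn1 : n = 1 := hr1 hre
      have : x.val < 1 := hn1 ▸ ZMod.val_lt x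
      omega
  -- the equiv
  have hmlt : ∀ x : ZMod n, x.val / r < m := by
    intro x
    rw [Nat.div_lt_iff_lt_mul hrpos, mul_comm, hrm]
    exact ZMod.val_lt x
  set f : ZMod n → ZMod r × Fin m := fun x => (((x.val : ℕ) : ZMod r), ⟨x.val / r, hmlt x⟩)
    with hfdef
  have hinj : Function.Injective f := by
    intro x y hxy
    have h1 : x.val % r = y.val % r := by
      have h := congrArg (fun p => (Prod.fst p).val) hxy
      simp only [hfdef] at h
      rwa [ZMod.val_natCast, ZMod.val_natCast] at h
    have h2 : x.val / r = y.val / r := by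
      have := congrArg (fun p => (Prod.snd p).val) hxy
      simpa [hfdef] using this
    have : x.val = y.val := by
      rw [← Nat.div_add_mod x.val r, ← Nat.div_add_mod y.val r, h1, h2]
    exact ZMod.val_injective n this
  have hbij : Function.Bijective f := by
    rw [Fintype.bijective_iff_injective_and_card]
    refine ⟨hinj, ?_⟩
    simp [ZMod.card, hrm]
  refine ⟨⟨Equiv.ofBijective f hbij, ?_⟩⟩
  intro a b
  show (unitaryCayley r).Adj (f a).1 (f b).1 ↔ (unitaryCayley n).Adj a b
  show (((a.val : ℕ) : ZMod r) ≠ ((b.val : ℕ) : ZMod r) ∧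
      IsUnit (((a.val : ℕ) : ZMod r) - ((b.val : ℕ) : ZMod r))) ↔ (a ≠ b ∧ IsUnit (a - b))
  have hsub : ((a.val : ℕ) : ZMod r) - ((b.val : ℕ) : ZMod r) = (((a - b).val : ℕ) : ZMod r) := by
    rw [hcast, hcast, hcast, ← map_sub]
  have hne : (((a.val : ℕ) : ZMod r) ≠ ((b.val : ℕ) : ZMod r)) ↔
      (((a - b).val : ℕ) : ZMod r) ≠ 0 := by
    rw [← hsub, sub_ne_zero]
  rw [hsub, hne]
  have hab : (a ≠ b) ↔ (a - b ≠ 0) := sub_ne_zero.symm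
  rw [hab]
  exact key (a - b)
end

section
/- For positive integers n and k, the number of ordered k-tuples (u₁,…,u_k) of units of Z/nZ with u₁ + ⋯ + u_k ≡ 0 (mod n) equals (n/rad(n))^{k-1} · ∏_{p | n, p prime} (p-1)/p · ((p-1)^{k-1} - (-1)^{k-1}). -/
noncomputable def solveLastEquiv (R : Type*) [CommRing R] (k : ℕ) :
    {u : Fin (k+1) → Rˣ // ∑ i, ((u i : R)) = 0} ≃
    {w : Fin k → Rˣ // IsUnit (∑ i, ((w i : R)))} where
  toFun u := ⟨fun i => u.1 i.castSucc, by
    have h := u.2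
    rw [Fin.sum_univ_castSucc] at h
    rw [eq_neg_of_add_eq_zero_left h]
    exact ((u.1 (Fin.last k)).isUnit).neg⟩
  invFun w := ⟨Fin.snoc w.1 (w.2.neg.unit), by
    rw [Fin.sum_univ_castSucc]
    simp [Fin.snoc_castSucc, Fin.snoc_last, IsUnit.unit_spec]⟩
  left_inv u := by
    apply Subtype.ext
    funext i
    induction i using Fin.lastCases with
    | last =>
      simp only [Fin.snoc_last]
      apply Units.ext
      rw [IsUnit.unit_spec]
      have h := u.2
      rw [Fin.sum_univ_castSucc] at h
      rw [eq_neg_of_add_eq_zero_right h]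
    | cast i => simp only [Fin.snoc_castSucc]
  right_inv w := by
    apply Subtype.ext
    funext i
    simp [Fin.snoc_castSucc]

noncomputable def fiberEquiv {G H : Type*} [Group G] [Group H] (φ : G →* H)
    (hφ : Function.Surjective φ) (m : ℕ) (P : (Fin m → H) → Prop) :
    {u : Fin m → G // P (fun i => φ (u i))} ≃
    {v : Fin m → H // P v} × (Fin m → φ.ker) where
  toFun u := (⟨fun i => φ (u.1 i), u.2⟩,
    fun i => ⟨(Function.surjInv hφ (φ (u.1 i)))⁻¹ * u.1 i, by
      simp [MonoidHom.mem_ker, Function.surjInv_eq hφ]⟩)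
  invFun x := ⟨fun i => Function.surjInv hφ (x.1.1 i) * (x.2 i : G), by
    have h : ∀ i, φ (Function.surjInv hφ (x.1.1 i) * (x.2 i : G)) = x.1.1 i := by
      intro i
      have hk : φ (x.2 i : G) = 1 := (x.2 i).2
      simp [Function.surjInv_eq hφ, hk]
    simpa [h] using x.1.2⟩
  left_inv u := by
    apply Subtype.ext
    funext i
    simp
  right_inv x := by
    have h : ∀ i, φ (Function.surjInv hφ (x.1.1 i) * (x.2 i : G)) = x.1.1 i := by
      intro i
      have hk : φ (x.2 i : G) = 1 := (x.2 i).2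
      simp [Function.surjInv_eq hφ, hk]
    refine Prod.ext (Subtype.ext (funext fun i => h i)) (funext fun i => Subtype.ext ?_)
    simp [h]

lemma field_closed (p : ℕ) (hp : p.Prime) (k : ℕ) :
    (Nat.card {u : Fin k → (ZMod p)ˣ // ∑ i, ((u i : ZMod p)) = 0} : ℚ) =
      (((p : ℚ) - 1) ^ k + (-1) ^ k * ((p : ℚ) - 1)) / p := by
  haveI : Fact p.Prime := ⟨hp⟩
  have hp0 : (p : ℚ) ≠ 0 := by exact_mod_cast hp.ne_zero
  induction k with
  | zero =>
    have : Nat.card {u : Fin 0 → (ZMod p)ˣ // ∑ i, ((u i : ZMod p)) = 0} = 1 := by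
      rw [Nat.card_eq_one_iff_unique]
      constructor
      · exact ⟨fun a b => Subtype.ext (funext (fun i => i.elim0))⟩
      · exact ⟨⟨fun i => i.elim0, by simp⟩⟩
    rw [this]
    field_simp
    push_cast; ring
  | succ k ih =>
    have e := solveLastEquiv (ZMod p) k
    rw [Nat.card_congr e]
    have hiff : ∀ w : Fin k → (ZMod p)ˣ,
        IsUnit (∑ i, ((w i : ZMod p))) ↔ ¬ (∑ i, ((w i : ZMod p)) = 0) := by
      intro w; rw [isUnit_iff_ne_zero]
    rw [Nat.card_congr (Equiv.subtypeEquivRight hiff)]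
    classical
    have hcard : Nat.card {w : Fin k → (ZMod p)ˣ // ¬ (∑ i, ((w i : ZMod p)) = 0)}
        = (p-1)^k - Nat.card {w : Fin k → (ZMod p)ˣ // ∑ i, ((w i : ZMod p)) = 0} := by
      rw [Nat.card_eq_fintype_card, Nat.card_eq_fintype_card, Fintype.card_subtype_compl]
      congr 1
      rw [Fintype.card_fun, ZMod.card_units_eq_totient, Nat.totient_prime hp, Fintype.card_fin]
    have hle : Nat.card {w : Fin k → (ZMod p)ˣ // ∑ i, ((w i : ZMod p)) = 0} ≤ (p-1)^k := by
      rw [Nat.card_eq_fintype_card]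
      calc Fintype.card {w : Fin k → (ZMod p)ˣ // ∑ i, ((w i : ZMod p)) = 0}
          ≤ Fintype.card (Fin k → (ZMod p)ˣ) := Fintype.card_subtype_le _
        _ = (p-1)^k := by
            rw [Fintype.card_fun, ZMod.card_units_eq_totient, Nat.totient_prime hp,
              Fintype.card_fin]
    rw [hcard, Nat.cast_sub hle, ih]
    have hp1 : (1:ℕ) ≤ p := hp.one_lt.le
    push_cast [hp1]
    field_simp
    ring

lemma isUnit_cast_iff {p a : ℕ} (hp : p.Prime) (ha : 0 < a) (x : ZMod (p^a)) :
    IsUnit (ZMod.castHom (dvd_pow_self p ha.ne') (ZMod p) x) ↔ IsUnit x := by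
  haveI : Fact p.Prime := ⟨hp⟩
  haveI : NeZero (p^a) := ⟨pow_ne_zero a hp.ne_zero⟩
  have hx : x = ((x.val : ℕ) : ZMod (p^a)) := by rw [ZMod.natCast_val, ZMod.cast_id]
  rw [hx, map_natCast, ZMod.isUnit_iff_coprime, ZMod.isUnit_iff_coprime,
    Nat.coprime_pow_right_iff ha]

lemma prime_pow_step (p a m : ℕ) (hp : p.Prime) (ha : 0 < a) :
    Nat.card {u : Fin (m+1) → (ZMod (p^a))ˣ // ∑ i, ((u i : ZMod (p^a))) = 0}
      = p ^ ((a-1)*m) *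
        Nat.card {u : Fin (m+1) → (ZMod p)ˣ // ∑ i, ((u i : ZMod p)) = 0} := by
  haveI : Fact p.Prime := ⟨hp⟩
  haveI : NeZero (p^a) := ⟨pow_ne_zero a hp.ne_zero⟩
  set dv : p ∣ p^a := dvd_pow_self p ha.ne'
  set φ := ZMod.unitsMap dv
  have hφ : Function.Surjective φ := ZMod.unitsMap_surjective dv
  rw [Nat.card_congr (solveLastEquiv (ZMod (p^a)) m)]
  have hcond : ∀ w : Fin m → (ZMod (p^a))ˣ,
      IsUnit (∑ i, ((w i : ZMod (p^a)))) ↔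
      (fun v : Fin m → (ZMod p)ˣ => IsUnit (∑ i, ((v i : ZMod p)))) (fun i => φ (w i)) := by
    intro w
    have : ∀ i, ((φ (w i) : ZMod p)) = ZMod.castHom dv (ZMod p) ((w i : ZMod (p^a))) := by
      intro i; simp only [φ, ZMod.unitsMap_def, Units.coe_map]; rfl
    simp only [this]
    rw [← map_sum, isUnit_cast_iff hp ha]
  rw [Nat.card_congr (Equiv.subtypeEquivRight hcond)]
  rw [Nat.card_congr (fiberEquiv φ hφ m (fun v => IsUnit (∑ i, ((v i : ZMod p)))))]
  rw [Nat.card_prod, Nat.card_fun]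
  have hker : Nat.card φ.ker = p ^ (a-1) := by
    have h1 : Nat.card (ZMod (p^a))ˣ = Nat.card ((ZMod (p^a))ˣ ⧸ φ.ker) * Nat.card φ.ker :=
      Subgroup.card_eq_card_quotient_mul_card_subgroup _
    have h2 : Nat.card ((ZMod (p^a))ˣ ⧸ φ.ker) = Nat.card (ZMod p)ˣ :=
      Nat.card_congr (QuotientGroup.quotientKerEquivOfSurjective φ hφ).toEquiv
    rw [h2, Nat.card_eq_fintype_card, Nat.card_eq_fintype_card,
      ZMod.card_units_eq_totient, ZMod.card_units_eq_totient,
      Nat.totient_prime_pow hp ha, Nat.totient_prime hp] at h1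
    have hpos : 0 < p - 1 := Nat.sub_pos_of_lt hp.one_lt
    rw [mul_comm (p-1) (Nat.card φ.ker)] at h1
    exact (Nat.eq_of_mul_eq_mul_right hpos h1).symm
  rw [hker]
  rw [Nat.card_congr (solveLastEquiv (ZMod p) m)]
  have : Nat.card (Fin m) = m := by simp
  rw [this, ← pow_mul]
  ring

lemma mul_step (m n k : ℕ) (hm : 0 < m) (hn : 0 < n) (h : m.Coprime n) :
    Nat.card {u : Fin k → (ZMod (m*n))ˣ // ∑ i, ((u i : ZMod (m*n))) = 0}
      = Nat.card {u : Fin k → (ZMod m)ˣ // ∑ i, ((u i : ZMod m)) = 0} *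
        Nat.card {u : Fin k → (ZMod n)ˣ // ∑ i, ((u i : ZMod n)) = 0} := by
  haveI : NeZero m := ⟨hm.ne'⟩
  haveI : NeZero n := ⟨hn.ne'⟩
  set e := ZMod.chineseRemainder h with he
  set E1 : (ZMod (m*n))ˣ ≃ (ZMod m)ˣ × (ZMod n)ˣ :=
    (Units.mapEquiv e.toMulEquiv).toEquiv.trans MulEquiv.prodUnits.toEquiv with hE1
  set F : (Fin k → (ZMod (m*n))ˣ) ≃ (Fin k → (ZMod m)ˣ) × (Fin k → (ZMod n)ˣ) :=
    (Equiv.piCongrRight (fun _ => E1)).trans (Equiv.arrowProdEquivProdArrow _ _ _) with hF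
  have key : ∀ u : Fin k → (ZMod (m*n))ˣ,
      (∑ i, ((u i : ZMod (m*n))) = 0) ↔
      ((∑ i, (((F u).1 i : ZMod m)) = 0) ∧ (∑ i, (((F u).2 i : ZMod n)) = 0)) := by
    intro u
    have h1 : ∀ i, ((((F u).1 i : (ZMod m)ˣ)) : ZMod m) = (e ((u i : ZMod (m*n)))).1 := by
      intro i
      simp [hF, hE1, Equiv.arrowProdEquivProdArrow, MulEquiv.prodUnits]
    have h2 : ∀ i, ((((F u).2 i : (ZMod n)ˣ)) : ZMod n) = (e ((u i : ZMod (m*n)))).2 := by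
      intro i
      simp [hF, hE1, Equiv.arrowProdEquivProdArrow, MulEquiv.prodUnits]
    simp only [h1, h2]
    rw [← Prod.fst_sum, ← Prod.snd_sum, ← map_sum]
    constructor
    · intro hs; rw [hs, map_zero]; simp
    · intro ⟨ha, hb⟩
      have : e (∑ i, ((u i : ZMod (m*n)))) = 0 := Prod.ext ha hb
      have := congrArg e.symm this
      simpa using this
  have E2 := (Equiv.subtypeEquiv (q := fun c : (Fin k → (ZMod m)ˣ) × (Fin k → (ZMod n)ˣ) =>
      (∑ i, ((c.1 i : ZMod m)) = 0) ∧ (∑ i, ((c.2 i : ZMod n)) = 0)) F key).trans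
    (Equiv.subtypeProdEquivProd
      (p := fun a : Fin k → (ZMod m)ˣ => ∑ i, ((a i : ZMod m)) = 0)
      (q := fun b : Fin k → (ZMod n)ˣ => ∑ i, ((b i : ZMod n)) = 0))
  rw [Nat.card_congr E2, Nat.card_prod]

lemma rad_pos (n : ℕ) : 0 < rad n :=
  Finset.prod_pos (fun p hp => (Nat.prime_of_mem_primeFactors hp).pos)

theorem homogeneous_unit_sums_count (n k : ℕ) (hn : 0 < n) (hk : 0 < k) :
    (Nat.card {u : Fin k → (ZMod n)ˣ // ∑ i, ((u i : ZMod n)) = 0} : ℚ) =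
      ((n : ℚ) / rad n) ^ (k - 1) *
        ∏ p ∈ n.primeFactors,
          ((p : ℚ) - 1) / p * (((p : ℚ) - 1) ^ (k - 1) - (-1) ^ (k - 1)) := by
  obtain ⟨m, rfl⟩ : ∃ m, k = m + 1 := ⟨k - 1, (Nat.succ_pred_eq_of_pos hk).symm⟩
  simp only [Nat.add_sub_cancel]
  induction n using Nat.recOnPosPrimePosCoprime with
  | zero => exact absurd hn (lt_irrefl 0)
  | one =>
    have hcard : Nat.card {u : Fin (m+1) → (ZMod 1)ˣ // ∑ i, ((u i : ZMod 1)) = 0} = 1 := by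
      rw [Nat.card_eq_one_iff_unique]
      exact ⟨⟨fun a b => Subtype.ext (Subsingleton.elim _ _)⟩,
        ⟨⟨fun _ => 1, Subsingleton.elim _ _⟩⟩⟩
    rw [hcard]
    simp [rad, Nat.primeFactors_one]
  | prime_pow p a hp ha =>
    haveI : Fact p.Prime := ⟨hp⟩
    have hpf : (p^a).primeFactors = {p} := by
      rw [Nat.primeFactors_pow p ha.ne', hp.primeFactors]
    have hrad : rad (p^a) = p := by rw [rad, hpf]; simp
    rw [prime_pow_step p a m hp ha, hrad, hpf]
    push_cast
    rw [field_closed p hp (m+1)]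
    have hp0 : (p : ℚ) ≠ 0 := by exact_mod_cast hp.ne_zero
    have hcast : ((p:ℚ)^a) / p = (p:ℚ)^(a-1) := by
      rw [div_eq_iff hp0, ← pow_succ, Nat.sub_add_cancel ha]
    rw [hcast, Finset.prod_singleton, ← pow_mul]
    field_simp
    ring
  | coprime a b ha hb hab iha ihb =>
    have ha0 : 0 < a := lt_trans one_pos ha
    have hb0 : 0 < b := lt_trans one_pos hb
    rw [mul_step a b (m+1) ha0 hb0 hab]
    push_cast
    rw [iha ha0, ihb hb0]
    have hpf : (a*b).primeFactors = a.primeFactors ∪ b.primeFactors :=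
      Nat.primeFactors_mul ha0.ne' hb0.ne'
    have hdisj := hab.disjoint_primeFactors
    have hrad : rad (a*b) = rad a * rad b := by
      rw [rad, hpf, Finset.prod_union hdisj]; rfl
    rw [hpf, Finset.prod_union hdisj, hrad]
    have haq : (rad a : ℚ) ≠ 0 := by exact_mod_cast (rad_pos a).ne'
    have hbq : (rad b : ℚ) ≠ 0 := by exact_mod_cast (rad_pos b).ne'
    push_cast
    rw [show ((a:ℚ)*b/((rad a:ℚ)*(rad b))) = ((a:ℚ)/rad a)*((b:ℚ)/rad b) from
      (div_mul_div_comm _ _ _ _).symm, mul_pow]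
    ring
end

section
/- For positive integers n, k with n squarefree and r ∈ Z/nZ, the number of ordered k-tuples of units of Z/nZ summing to r equals ∏_{p|n, p|r} (p-1)/p·((p-1)^{k-1}-(-1)^{k-1}) · ∏_{p|n, p∤r} ((p-1)^k - (-1)^k)/p. -/
open Finset

def sigma_equiv (p k : ℕ) [NeZero p] (r : ZMod p) :
    {u : Fin (k+1) → (ZMod p)ˣ // ∑ i, ((u i : ZMod p)) = r} ≃
      (x : (ZMod p)ˣ) × {u : Fin k → (ZMod p)ˣ // ∑ i, ((u i : ZMod p)) = r - x} where
  toFun u := ⟨u.1 0, Fin.tail u.1, by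
    have := u.2
    rw [Fin.sum_univ_succ] at this
    simp [Fin.tail, ← this]⟩
  invFun x := ⟨Fin.cons x.1 x.2.1, by
    rw [Fin.sum_univ_succ]
    simp [x.2.2]⟩
  left_inv u := by
    apply Subtype.ext
    exact Fin.cons_self_tail u.1
  right_inv x := by
    refine Sigma.ext (by simp) ?_
    refine (Subtype.heq_iff_coe_eq ?_).mpr ?_ <;> simp [Fin.tail_cons]

lemma prime_count (p : ℕ) [hp : Fact p.Prime] (k : ℕ) (r : ZMod p) :
    (Nat.card {u : Fin k → (ZMod p)ˣ // ∑ i, ((u i : ZMod p)) = r} : ℚ) =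
      (((p : ℚ) - 1) ^ k - (-1) ^ k) / p + (-1)^k * (if r = 0 then 1 else 0) := by
  induction k generalizing r with
  | zero =>
    have : {u : Fin 0 → (ZMod p)ˣ // ∑ i, ((u i : ZMod p)) = r} ≃ PLift ((0 : ZMod p) = r) := by
      refine Equiv.trans ?_ (Equiv.plift).symm
      exact { toFun := fun u => by simpa using u.2
              invFun := fun h => ⟨fun i => i.elim0, by simpa using h⟩
              left_inv := fun u => Subtype.ext (funext fun i => i.elim0)
              right_inv := fun h => rfl }
    rw [Nat.card_congr this]
    rcases eq_or_ne r 0 with h | h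
    · simp [h, Nat.card_eq_one_iff_unique]
    · have : ¬ ((0 : ZMod p) = r) := Ne.symm h
      simp [this, h]
  | succ k ih =>
    rw [Nat.card_congr (sigma_equiv p k r), Nat.card_eq_fintype_card, Fintype.card_sigma]
    push_cast
    simp only [← Nat.card_eq_fintype_card, ih]
    rw [Finset.sum_add_distrib, Finset.sum_const, Finset.card_univ, ZMod.card_units]
    have hsum : ∑ x : (ZMod p)ˣ, (-1:ℚ)^k * (if r - (x : ZMod p) = 0 then 1 else 0)
        = (-1:ℚ)^k * (if r = 0 then 0 else 1) := by
      rw [← Finset.mul_sum]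
      congr 1
      rcases eq_or_ne r 0 with h | h
      · rw [if_pos h]
        apply Finset.sum_eq_zero
        intro x _
        rw [if_neg]
        simp [h, sub_eq_zero]
      · rw [if_neg h]
        have hr : IsUnit r := isUnit_iff_ne_zero.mpr h
        calc ∑ x : (ZMod p)ˣ, (if r - (x:ZMod p) = 0 then (1:ℚ) else 0)
            = ∑ x : (ZMod p)ˣ, (if x = hr.unit then (1:ℚ) else 0) := by
              apply Finset.sum_congr rfl
              intro x _
              have : (r - (x:ZMod p) = 0) ↔ (x = hr.unit) := by
                rw [sub_eq_zero, Units.ext_iff, hr.unit_spec]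
                exact eq_comm
              simp [this]
          _ = 1 := by simp
    rw [hsum]
    have hp1 : (1:ℚ) ≤ (p:ℚ) := by exact_mod_cast hp.out.one_lt.le
    have hp0 : (p:ℚ) ≠ 0 := by positivity
    have hc : ((p - 1 : ℕ) : ℚ) = (p : ℚ) - 1 := by
      push_cast [Nat.cast_sub hp.out.one_lt.le]
      ring
    rw [nsmul_eq_mul, hc]
    rcases eq_or_ne r 0 with h | h <;> simp [h] <;> field_simp <;> ring

lemma count_mul (a b : ℕ) (ha : a ≠ 0) (hb : b ≠ 0) (hab : a.Coprime b) (k : ℕ)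
    (r : ZMod (a*b)) :
    Nat.card {u : Fin k → (ZMod (a*b))ˣ // ∑ i, ((u i : ZMod (a*b))) = r}
    = Nat.card {u : Fin k → (ZMod a)ˣ // ∑ i, ((u i : ZMod a))
        = ZMod.castHom (dvd_mul_right a b) (ZMod a) r}
    * Nat.card {u : Fin k → (ZMod b)ˣ // ∑ i, ((u i : ZMod b))
        = ZMod.castHom (dvd_mul_left b a) (ZMod b) r} := by
  haveI : NeZero a := ⟨ha⟩
  haveI : NeZero b := ⟨hb⟩
  haveI : NeZero (a*b) := ⟨mul_ne_zero ha hb⟩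
  set e := ZMod.chineseRemainder hab with he
  have h1 : (ZMod.castHom (dvd_mul_right a b) (ZMod a)) =
      (RingHom.fst (ZMod a) (ZMod b)).comp e.toRingHom := RingHom.ext_zmod _ _
  have h2 : (ZMod.castHom (dvd_mul_left b a) (ZMod b)) =
      (RingHom.snd (ZMod a) (ZMod b)).comp e.toRingHom := RingHom.ext_zmod _ _
  set f : (ZMod (a*b))ˣ ≃* (ZMod a)ˣ × (ZMod b)ˣ :=
    (Units.mapEquiv e.toMulEquiv).trans MulEquiv.prodUnits with hf
  have hf1 : ∀ x : (ZMod (a*b))ˣ, ((f x).1 : ZMod a) = (e (x : ZMod (a*b))).1 := fun x => rfl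
  have hf2 : ∀ x : (ZMod (a*b))ˣ, ((f x).2 : ZMod b) = (e (x : ZMod (a*b))).2 := fun x => rfl
  rw [h1, h2]
  have E : {u : Fin k → (ZMod (a*b))ˣ // ∑ i, ((u i : ZMod (a*b))) = r} ≃
      {v : Fin k → (ZMod a)ˣ // ∑ i, ((v i : ZMod a)) = (e r).1}
      × {w : Fin k → (ZMod b)ˣ // ∑ i, ((w i : ZMod b)) = (e r).2} := by
    refine { toFun := fun u => (⟨fun i => (f (u.1 i)).1, ?_⟩, ⟨fun i => (f (u.1 i)).2, ?_⟩),
             invFun := fun vw => ⟨fun i => f.symm (vw.1.1 i, vw.2.1 i), ?_⟩,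
             left_inv := ?_, right_inv := ?_ }
    · simp only [hf1]
      rw [← Prod.fst_sum, ← map_sum, u.2]
    · simp only [hf2]
      rw [← Prod.snd_sum, ← map_sum, u.2]
    · apply e.injective
      rw [map_sum]
      have : ∀ i, e ((f.symm (vw.1.1 i, vw.2.1 i) : (ZMod (a*b)))) = ((vw.1.1 i : ZMod a), (vw.2.1 i : ZMod b)) := by
        intro i
        have hA := hf1 (f.symm (vw.1.1 i, vw.2.1 i))
        have hB := hf2 (f.symm (vw.1.1 i, vw.2.1 i))
        rw [f.apply_symm_apply] at hA hB
        exact Prod.ext (by simpa using hA.symm) (by simpa using hB.symm)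
      rw [Finset.sum_congr rfl (fun i _ => this i)]
      rw [Prod.ext_iff]
      constructor
      · rw [Prod.fst_sum]
        simpa using vw.1.2
      · rw [Prod.snd_sum]
        simpa using vw.2.2
    · intro u
      apply Subtype.ext
      funext i
      simp
    · intro vw
      ext i <;> simp
  rw [Nat.card_congr E, Nat.card_prod]
  rfl
lemma cast_dvd_val (a N : ℕ) (hN : N ≠ 0) (ha : a ≠ 0) (hdvd : a ∣ N) (r : ZMod N) (p : ℕ)
    (hpa : p ∣ a) :
    (p ∣ (ZMod.castHom hdvd (ZMod a) r).val) ↔ p ∣ r.val := by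
  haveI : NeZero N := ⟨hN⟩
  haveI : NeZero a := ⟨ha⟩
  rw [ZMod.castHom_apply, ← ZMod.natCast_val, ZMod.val_natCast]
  exact Nat.dvd_mod_iff hpa

lemma count_squarefree (k : ℕ) : ∀ n : ℕ, Squarefree n → ∀ r : ZMod n,
    (Nat.card {u : Fin k → (ZMod n)ˣ // ∑ i, ((u i : ZMod n)) = r} : ℚ) =
    ∏ p ∈ n.primeFactors,
      ((((p:ℚ)-1)^k - (-1)^k)/p + (-1)^k * (if (p : ℕ) ∣ r.val then 1 else 0)) := by
  refine Nat.recOnPosPrimePosCoprime ?_ ?_ ?_ ?_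
  · -- prime powers
    intro p m hp hm hsq
    have hm1 : m = 1 := by
      by_contra hm1
      have h2 : 2 ≤ m := by omega
      have : p * p ∣ p ^ m := by
        calc p * p = p ^ 2 := (sq p).symm
        _ ∣ p ^ m := pow_dvd_pow p h2
      exact hp.not_isUnit (hsq p this)
    subst hm1
    rw [pow_one] at hsq ⊢
    intro r
    have hpn : p.Prime := hp
    haveI : Fact p.Prime := ⟨hpn⟩
    rw [prime_count p k r, hpn.primeFactors, Finset.prod_singleton]
    congr 2
    have hval : p ∣ r.val ↔ r = 0 := by
      constructor
      · intro h
        have : r.val < p := ZMod.val_lt r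
        have : r.val = 0 := Nat.eq_zero_of_dvd_of_lt h this
        rwa [ZMod.val_eq_zero] at this
      · intro h
        simp [h]
    simp [hval]
  · intro hsq
    exact absurd hsq not_squarefree_zero
  · intro _ r
    have h1 : Nat.card {u : Fin k → (ZMod 1)ˣ // ∑ i, ((u i : ZMod 1)) = r} = 1 := by
      rw [Nat.card_eq_one_iff_unique]
      exact ⟨⟨fun x y => Subtype.ext (Subsingleton.elim _ _)⟩,
        ⟨⟨fun _ => 1, Subsingleton.elim _ _⟩⟩⟩
    rw [h1]
    simp
  · intro a b ha hb hab IHa IHb hsq r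
    have hsa : Squarefree a := hsq.squarefree_of_dvd (dvd_mul_right a b)
    have hsb : Squarefree b := hsq.squarefree_of_dvd (dvd_mul_left b a)
    rw [count_mul a b (by omega) (by omega) hab k r]
    push_cast
    rw [IHa hsa _, IHb hsb _,
      Nat.Coprime.primeFactors_mul hab,
      Finset.prod_union (Nat.Coprime.disjoint_primeFactors hab)]
    congr 1
    · apply Finset.prod_congr rfl
      intro p hp
      have := cast_dvd_val a (a*b) (by positivity) (by omega) (dvd_mul_right a b) r p
        (Nat.dvd_of_mem_primeFactors hp)
      simp only [ZMod.castHom_apply] at this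
      simp [this]
    · apply Finset.prod_congr rfl
      intro p hp
      have := cast_dvd_val b (a*b) (by positivity) (by omega) (dvd_mul_left b a) r p
        (Nat.dvd_of_mem_primeFactors hp)
      simp only [ZMod.castHom_apply] at this
      simp [this]
theorem unit_sums_count_squarefree (n k : ℕ) (hn : Squarefree n) (hk : 0 < k)
    (r : ZMod n) :
    (Nat.card {u : Fin k → (ZMod n)ˣ // ∑ i, ((u i : ZMod n)) = r} : ℚ) =
      (∏ p ∈ n.primeFactors.filter (fun p => (p : ℕ) ∣ r.val),
        ((p : ℚ) - 1) / p * (((p : ℚ) - 1) ^ (k - 1) - (-1) ^ (k - 1)))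
      * ∏ p ∈ n.primeFactors.filter (fun p => ¬ (p : ℕ) ∣ r.val),
        (((p : ℚ) - 1) ^ k - (-1) ^ k) / p := by
  classical
  rw [count_squarefree k n hn r,
    ← Finset.prod_filter_mul_prod_filter_not n.primeFactors (fun p => (p : ℕ) ∣ r.val)]
  obtain ⟨m, rfl⟩ : ∃ m, k = m + 1 := ⟨k - 1, (Nat.succ_pred_eq_of_pos hk).symm⟩
  congr 1
  · apply Finset.prod_congr rfl
    intro p hp
    rw [Finset.mem_filter] at hp
    have hpp := Nat.prime_of_mem_primeFactors hp.1
    have hp0 : (p:ℚ) ≠ 0 := Nat.cast_ne_zero.mpr hpp.pos.ne'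
    rw [if_pos hp.2]
    simp only [Nat.add_sub_cancel]
    field_simp
    ring
  · apply Finset.prod_congr rfl
    intro p hp
    rw [Finset.mem_filter] at hp
    rw [if_neg hp.2]
    ring
end
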